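/- Let a ∈ ℕⁿ be weakly increasing, π ∈ S_n, and b = I(π) + a ∘ π⁻¹. Then for every p ≥ 0 and every i ∈ [n], i ∈ Z_p(a) if and only if π(i) ∈ Z_p(b); in particular z_p(a) = z_p(b) for all p. -/

import Mathlib

/-- Inversion table: `I(π)_i = |{j < π⁻¹(i) : π(j) > i}|`. -/
def invTable {n : ℕ} (π : Equiv.Perm (Fin n)) (i : Fin n) : ℕ :=
  (Finset.univ.filter (fun j => j < π.symm i ∧ i < π j)).card

/-- The `p`-center `Z_p(a)`: the largest subset `{x_1 > ⋯ > x_q}` of `[n]` with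
`a_{x_j} ≤ p + j` for all `j`, obtained greedily from the largest index down. -/
def Zset (n p : ℕ) (a : Fin n → ℕ) : Finset (Fin n) :=
  (List.finRange n).reverse.foldl
    (fun s i => if a i ≤ p + s.card + 1 then insert i s else s) ∅

open Finset

lemma fold_gen {n : ℕ} (c : Fin n → ℕ) (p : ℕ) (P : Fin n → Prop) [DecidablePred P]
    (hP : ∀ i, (c i ≤ p + (Finset.univ.filter fun j => P j ∧ i < j).card + 1 ↔ P i)) :
    ∀ l : List (Fin n), l.Pairwise (· < ·) → (∀ i ∈ l, ∀ j, i < j → j ∈ l) →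
    l.foldr (fun i s => if c i ≤ p + s.card + 1 then insert i s else s) ∅
      = l.toFinset.filter P := by
  intro l
  induction l with
  | nil => intro _ _; simp
  | cons i xs ih =>
    intro hs hup
    have hlt : ∀ j ∈ xs, i < j := (List.pairwise_cons.mp hs).1
    have hs' : xs.Pairwise (· < ·) := (List.pairwise_cons.mp hs).2
    have hup' : ∀ i' ∈ xs, ∀ j, i' < j → j ∈ xs := by
      intro i' hi' j hj
      have hmem : j ∈ i :: xs := hup i' (List.mem_cons_of_mem _ hi') j hj
      rcases List.mem_cons.mp hmem with h | h
      · exact absurd (h ▸ (hlt i' hi').trans hj) (lt_irrefl i)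
      · exact h
    have key : xs.toFinset.filter P = Finset.univ.filter fun j => P j ∧ i < j := by
      ext j
      simp only [mem_filter, List.mem_toFinset, Finset.mem_univ, true_and]
      constructor
      · rintro ⟨hj, hPj⟩; exact ⟨hPj, hlt j hj⟩
      · rintro ⟨hPj, hij⟩
        have hjmem : j ∈ i :: xs := hup i List.mem_cons_self j hij
        rcases List.mem_cons.mp hjmem with h | h
        · exact absurd (h ▸ hij) (lt_irrefl i)
        · exact ⟨h, hPj⟩
    rw [List.foldr_cons, ih hs' hup']
    have hcond : (c i ≤ p + (xs.toFinset.filter P).card + 1) ↔ P i := by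
      rw [key]; exact hP i
    by_cases hPi : P i
    · rw [if_pos (hcond.mpr hPi)]
      rw [List.toFinset_cons, Finset.filter_insert, if_pos hPi]
    · rw [if_neg (fun h => hPi (hcond.mp h))]
      rw [List.toFinset_cons, Finset.filter_insert, if_neg hPi]

lemma Zset_eq {n : ℕ} (c : Fin n → ℕ) (p : ℕ) (P : Fin n → Prop) [DecidablePred P]
    (hP : ∀ i, (c i ≤ p + (Finset.univ.filter fun j => P j ∧ i < j).card + 1 ↔ P i)) :
    Zset n p c = Finset.univ.filter P := by
  unfold Zset
  rw [List.foldl_reverse]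
  have := fold_gen c p P hP (List.finRange n)
    (List.pairwise_lt_finRange n) (fun i _ j _ => List.mem_finRange j)
  rw [List.toFinset_finRange] at this
  exact this

lemma card_filter_perm {n : ℕ} (π : Equiv.Perm (Fin n)) (Q : Fin n → Prop) [DecidablePred Q] :
    (Finset.univ.filter fun j => Q j).card = (Finset.univ.filter fun k => Q (π k)).card := by
  apply Finset.card_bij (fun j _ => π.symm j)
  · intro j hj; simp only [mem_filter, Finset.mem_univ, true_and] at *
    simpa using hj
  · intro j1 _ j2 _ h; exact π.symm.injective h
  · intro k hk
    simp only [mem_filter, Finset.mem_univ, true_and] at hk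
    exact ⟨π k, by simp [hk], by simp⟩

theorem stmt16 {n : ℕ} (π : Equiv.Perm (Fin n)) (a : Fin n → ℕ) (ha : ∀ i, 0 < a i)
    (hmono : Monotone a) (p : ℕ) :
    let b : Fin n → ℕ := fun j => invTable π j + a (π.symm j)
    (∀ i : Fin n, i ∈ Zset n p a ↔ π i ∈ Zset n p b) ∧
    (Zset n p a).card = (Zset n p b).card := by
  intro b
  -- greedy condition for a
  have hPa : ∀ i, (a i ≤ p + (Finset.univ.filter fun j => a j ≤ p + 1 ∧ i < j).card + 1
      ↔ a i ≤ p + 1) := by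
    intro i
    constructor
    · intro h
      rcases Nat.eq_zero_or_pos (Finset.univ.filter fun j => a j ≤ p + 1 ∧ i < j).card with h0 | h0
      · omega
      · obtain ⟨j, hj⟩ := Finset.card_pos.mp h0
        simp only [mem_filter, Finset.mem_univ, true_and] at hj
        exact le_trans (hmono hj.2.le) hj.1
    · intro h; omega
  -- greedy condition for b
  have hPb : ∀ j, (b j ≤ p + (Finset.univ.filter fun j' => a (π.symm j') ≤ p + 1 ∧ j < j').card + 1
      ↔ a (π.symm j) ≤ p + 1) := by
    intro j
    set i := π.symm j with hi
    have hπi : π i = j := π.apply_symm_apply j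
    have hcard : (Finset.univ.filter fun j' => a (π.symm j') ≤ p + 1 ∧ j < j').card
        = (Finset.univ.filter fun k => a k ≤ p + 1 ∧ j < π k).card := by
      rw [card_filter_perm π (fun j' => a (π.symm j') ≤ p + 1 ∧ j < j')]
      congr 1; ext k; simp
    rw [hcard]
    show invTable π j + a i ≤ _ ↔ _
    have hinv : invTable π j = (Finset.univ.filter fun k => k < i ∧ j < π k).card := rfl
    constructor
    · intro h
      by_contra hgt
      push_neg at hgt
      -- a i ≥ p + 2 ; show selected count ≤ inv count
      have hsub : (Finset.univ.filter fun k => a k ≤ p + 1 ∧ j < π k)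
          ⊆ (Finset.univ.filter fun k => k < i ∧ j < π k) := by
        intro k hk
        simp only [mem_filter, Finset.mem_univ, true_and] at *
        refine ⟨?_, hk.2⟩
        by_contra hik
        push_neg at hik
        exact absurd (hmono hik) (by omega)
      have := Finset.card_le_card hsub
      rw [← hinv] at this
      omega
    · intro h
      have hsub : (Finset.univ.filter fun k => k < i ∧ j < π k)
          ⊆ (Finset.univ.filter fun k => a k ≤ p + 1 ∧ j < π k) := by
        intro k hk
        simp only [mem_filter, Finset.mem_univ, true_and] at *
        exact ⟨le_trans (hmono hk.1.le) h, hk.2⟩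
      have := Finset.card_le_card hsub
      rw [← hinv] at this
      omega
  have hZa : Zset n p a = Finset.univ.filter fun i => a i ≤ p + 1 := Zset_eq a p _ hPa
  have hZb : Zset n p b = Finset.univ.filter fun j => a (π.symm j) ≤ p + 1 := Zset_eq b p _ hPb
  constructor
  · intro i
    rw [hZa, hZb]
    simp
  · rw [hZa, hZb]
    exact card_filter_perm π.symm (fun i => a i ≤ p + 1)
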